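/- Let S be a tangent-valued 2-form and ψ a 1-form on a smooth manifold, and let Φ(S,ψ)(X,Y,Z) := (L_{S(X,Y)}ψ)(Z) − (L_X(ψ∘S))(Z,Y) − (L_Y(ψ∘S))(X,Z) + (ψ∘S)([X,Y],Z) be the Yano–Ako operator. Then its full antisymmetrization satisfies 3·Alt Φ(S,ψ) = L_S ψ + 2·d(ψ∘S), where L_S ψ = i_S dψ + d(i_S ψ) is the Frölicher–Nijenhuis Lie derivative and Alt is the antisymmetrization over the three arguments. -/

import Mathlib

open scoped BigOperators

noncomputable section

/-- Points of the model space `ℝ^m`. -/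
abbrev Pt (m : ℕ) := Fin m → ℝ
/-- Vector fields (or 1-forms) on `ℝ^m`, given by their components. -/
abbrev VF (m : ℕ) := Pt m → Fin m → ℝ
/-- (0,2)-tensor fields (or (1,1)-tensor fields) on `ℝ^m`, given by components. -/
abbrev T02 (m : ℕ) := Pt m → Fin m → Fin m → ℝ
/-- (0,3)- or (1,2)-tensor fields on `ℝ^m`, given by components. -/
abbrev T3 (m : ℕ) := Pt m → Fin m → Fin m → Fin m → ℝ

variable {m : ℕ}

/-- `i`-th partial derivative of a scalar function. -/
def pd (i : Fin m) (f : Pt m → ℝ) (x : Pt m) : ℝ :=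
  fderiv ℝ f x (Pi.single i 1)

/-- Derivative of a function `f` along a vector field `X`. -/
def Xdot (X : VF m) (f : Pt m → ℝ) (x : Pt m) : ℝ :=
  ∑ k, X x k * pd k f x

/-- Lie bracket of vector fields, in components. -/
def lieB (X Y : VF m) : VF m := fun x i =>
  ∑ k, (X x k * pd k (fun y => Y y i) x - Y x k * pd k (fun y => X y i) x)

/-- Evaluation `ψ(X)` of a 1-form on a vector field. -/
def ev1 (ψ X : VF m) (x : Pt m) : ℝ := ∑ i, ψ x i * X x i

/-- Exterior derivative of a function, as a 1-form. -/
def dF (f : Pt m → ℝ) : VF m := fun x i => pd i f x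

/-- Exterior derivative of a 1-form, as a 2-form: `(dψ)_{ij} = ∂_i ψ_j - ∂_j ψ_i`. -/
def d2 (ψ : VF m) : T02 m := fun x i j =>
  pd i (fun y => ψ y j) x - pd j (fun y => ψ y i) x

/-- Evaluation of a (0,2)-tensor field on two vector fields. -/
def ev2 (T : T02 m) (X Y : VF m) (x : Pt m) : ℝ :=
  ∑ i, ∑ j, T x i j * X x i * Y x j

/-- Lie derivative of a 1-form `ψ` along `X`, evaluated on `Y`:
`(L_X ψ)(Y) = X·(ψ(Y)) - ψ([X,Y])`. -/
def lie1 (X ψ Y : VF m) (x : Pt m) : ℝ :=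
  Xdot X (ev1 ψ Y) x - ev1 ψ (lieB X Y) x

/-- Lie derivative of a (0,2)-tensor field `T` along `X`, evaluated on `Y, Z`:
`(L_X T)(Y,Z) = X·T(Y,Z) - T([X,Y],Z) - T(Y,[X,Z])`. -/
def lie2 (X : VF m) (T : T02 m) (Y Z : VF m) (x : Pt m) : ℝ :=
  Xdot X (ev2 T Y Z) x - ev2 T (lieB X Y) Z x - ev2 T Y (lieB X Z) x

/-- Application of a (1,1)-tensor field to a vector field: `(φX)^i = φ^i_j X^j`. -/
def appT (φ : T02 m) (X : VF m) : VF m := fun x i => ∑ j, φ x i j * X x j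

/-- `(ψ∘₁φ)(X,Y) = ψ(φX,Y)`, in components `(ψ∘₁φ)_{ij} = ψ_{aj} φ^a_i`. -/
def comp1 (ψ φ : T02 m) : T02 m := fun x i j => ∑ a, ψ x a j * φ x a i

/-- `(ψ∘₂φ)(X,Y) = ψ(X,φY)`, in components `(ψ∘₂φ)_{ij} = ψ_{ia} φ^a_j`. -/
def comp2 (ψ φ : T02 m) : T02 m := fun x i j => ∑ a, ψ x i a * φ x a j

/-- Composition `ψ∘φ` of a 1-form with a (1,1)-tensor field:  `(ψ∘φ)_i = ψ_a φ^a_i`. -/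
def compF (ψ : VF m) (φ : T02 m) : VF m := fun x i => ∑ a, ψ x a * φ x a i

/-- Exterior derivative of a 2-form `T`, as a 3-form:
`(dT)_{ijk} = ∂_i T_{jk} - ∂_j T_{ik} + ∂_k T_{ij}`. -/
def d3 (T : T02 m) : T3 m := fun x i j k =>
  pd i (fun y => T y j k) x - pd j (fun y => T y i k) x + pd k (fun y => T y i j) x

/-- Evaluation of a (0,3)-tensor field on three vector fields. -/
def ev3 (U : T3 m) (X Y Z : VF m) (x : Pt m) : ℝ :=
  ∑ i, ∑ j, ∑ k, U x i j k * X x i * Y x j * Z x k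

/-- Pointwise sum of vector fields. -/
def addV (X Y : VF m) : VF m := fun x i => X x i + Y x i

/-- Pointwise multiplication of a vector field by a function. -/
def smulV (f : Pt m → ℝ) (X : VF m) : VF m := fun x i => f x * X x i


/-- Application of a (1,2)-tensor field (tangent-valued 2-form) to two vector
fields: `S(X,Y)^a = S^a_{jk} X^j Y^k`. -/
def appS (S : T3 m) (X Y : VF m) : VF m := fun x a =>
  ∑ j, ∑ k, S x a j k * X x j * Y x k

/-- The (0,2)-tensor field `ψ∘S`, `(ψ∘S)(X,Y) = ψ(S(X,Y))`, in components
`(ψ∘S)_{jk} = ψ_a S^a_{jk}`. -/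
def psiS (ψ : VF m) (S : T3 m) : T02 m := fun x j k => ∑ a, ψ x a * S x a j k

/-- The Yano–Ako operator
`Φ(S,ψ)(X,Y,Z) = (L_{S(X,Y)}ψ)(Z) − (L_X(ψ∘S))(Z,Y) − (L_Y(ψ∘S))(X,Z)
  + (ψ∘S)([X,Y],Z)`. -/
def yanoAko (S : T3 m) (ψ : VF m) (X Y Z : VF m) (x : Pt m) : ℝ :=
  lie1 (appS S X Y) ψ Z x - lie2 X (psiS ψ S) Z Y x - lie2 Y (psiS ψ S) X Z x
  + ev2 (psiS ψ S) (lieB X Y) Z x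


/-- The Frölicher–Nijenhuis Lie derivative `L_S ψ := i_S dψ + d(i_S ψ)` of a
1-form `ψ` along a tangent-valued 2-form `S`, evaluated on `X, Y, Z`, where
`i_S ψ = ψ∘S` and
`(i_S dψ)(X,Y,Z) = dψ(S(X,Y),Z) + dψ(S(Y,Z),X) + dψ(S(Z,X),Y)`. -/
def lieS (S : T3 m) (ψ : VF m) (X Y Z : VF m) (x : Pt m) : ℝ :=
  (ev2 (d2 ψ) (appS S X Y) Z x + ev2 (d2 ψ) (appS S Y Z) X x
    + ev2 (d2 ψ) (appS S Z X) Y x)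
  + ev3 (d3 (psiS ψ S)) X Y Z x

/-- Antisymmetrization of a ternary operator on vector fields:
`(Alt T)(X,Y,Z) = (1/6) ∑_σ sgn(σ) T(σ(X,Y,Z))`. -/
def altOp (T : VF m → VF m → VF m → Pt m → ℝ) (X Y Z : VF m) (x : Pt m) : ℝ :=
  (1 / 6 : ℝ) * (T X Y Z x - T Y X Z x + T Y Z X x - T Z Y X x
    + T Z X Y x - T X Z Y x)

section Helpers
variable {m : ℕ}

lemma pd_neg (l : Fin m) (f : Pt m → ℝ) (x : Pt m) :
    pd l (fun y => -f y) x = - pd l f x := by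
  simp [pd, fderiv_neg]

lemma pd_sumF {ι : Type*} [Fintype ι] (l : Fin m) (f : ι → Pt m → ℝ) (x : Pt m)
    (h : ∀ i, DifferentiableAt ℝ (f i) x) :
    pd l (fun y => ∑ i, f i y) x = ∑ i, pd l (f i) x := by
  unfold pd
  rw [fderiv_fun_sum (fun i _ => h i)]
  simp

lemma pd_mul (l : Fin m) (f g : Pt m → ℝ) (x : Pt m)
    (hf : DifferentiableAt ℝ f x) (hg : DifferentiableAt ℝ g x) :
    pd l (fun y => f y * g y) x = pd l f x * g x + f x * pd l g x := by
  unfold pd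
  rw [fderiv_fun_mul hf hg]
  simp [Pi.add_apply]
  ring

lemma diffV {X : VF m} (hX : ContDiff ℝ (⊤ : ℕ∞) X) (i : Fin m) :
    Differentiable ℝ (fun y => X y i) :=
  ((contDiff_pi.1 hX) i).differentiable (by simp)

lemma diffT2 {T : T02 m} (hT : ContDiff ℝ (⊤ : ℕ∞) T) (i j : Fin m) :
    Differentiable ℝ (fun y => T y i j) :=
  ((contDiff_pi.1 ((contDiff_pi.1 hT) i)) j).differentiable (by simp)

lemma diffT3 {S : T3 m} (hS : ContDiff ℝ (⊤ : ℕ∞) S) (a i j : Fin m) :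
    Differentiable ℝ (fun y => S y a i j) :=
  ((contDiff_pi.1 ((contDiff_pi.1 ((contDiff_pi.1 hS) a)) i)) j).differentiable (by simp)

lemma contDiff_psiS {S : T3 m} {ψ : VF m} (hS : ContDiff ℝ (⊤ : ℕ∞) S)
    (hψ : ContDiff ℝ (⊤ : ℕ∞) ψ) : ContDiff ℝ (⊤ : ℕ∞) (psiS ψ S) := by
  rw [show psiS ψ S = fun x j k => ∑ a, ψ x a * S x a j k from rfl, contDiff_pi]
  intro j
  rw [contDiff_pi]
  intro k
  exact ContDiff.sum fun a _ =>
    ((contDiff_pi.1 hψ) a).mul ((contDiff_pi.1 ((contDiff_pi.1 ((contDiff_pi.1 hS) a)) j)) k)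

lemma sum_antisym_zero (s : Fin m → Fin m → ℝ) (h : ∀ i j, s i j = - s j i) :
    ∑ i, ∑ j, s i j = 0 := by
  have h2 : ∑ i, ∑ j, s i j = - (∑ i, ∑ j, s i j) := by
    calc ∑ i, ∑ j, s i j = ∑ j, ∑ i, s i j := Finset.sum_comm
      _ = ∑ j, ∑ i, -(s j i) := by
          refine Finset.sum_congr rfl fun j _ => Finset.sum_congr rfl fun i _ => h i j
      _ = - (∑ j, ∑ i, s j i) := by simp
  linarith

end Helpers

section Expand
variable {m : ℕ}

lemma pd_ev1 {ψ Z : VF m} (hψ : ContDiff ℝ (⊤:ℕ∞) ψ) (hZ : ContDiff ℝ (⊤:ℕ∞) Z)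
    (l : Fin m) (x : Pt m) :
    pd l (ev1 ψ Z) x
      = ∑ i, (pd l (fun y => ψ y i) x * Z x i + ψ x i * pd l (fun y => Z y i) x) := by
  rw [show (ev1 ψ Z) = (fun y => ∑ i, ψ y i * Z y i) from rfl,
    pd_sumF l (fun i y => ψ y i * Z y i) x (fun i => ((diffV hψ i).mul (diffV hZ i)).differentiableAt)]
  exact Finset.sum_congr rfl fun i _ =>
    pd_mul l (fun y => ψ y i) (fun y => Z y i) x
      (diffV hψ i).differentiableAt (diffV hZ i).differentiableAt

lemma pd_ev2 {T : T02 m} {U V : VF m} (hT : ContDiff ℝ (⊤:ℕ∞) T)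
    (hU : ContDiff ℝ (⊤:ℕ∞) U) (hV : ContDiff ℝ (⊤:ℕ∞) V) (l : Fin m) (x : Pt m) :
    pd l (ev2 T U V) x = ∑ i, ∑ j,
      (pd l (fun y => T y i j) x * U x i * V x j
       + T x i j * pd l (fun y => U y i) x * V x j
       + T x i j * U x i * pd l (fun y => V y j) x) := by
  have hd : ∀ i j : Fin m, DifferentiableAt ℝ (fun y => T y i j * U y i * V y j) x :=
    fun i j => (((diffT2 hT i j).mul (diffV hU i)).mul (diffV hV j)).differentiableAt
  rw [show (ev2 T U V) = (fun y => ∑ i, ∑ j, T y i j * U y i * V y j) from rfl,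
    pd_sumF l (fun i y => ∑ j, T y i j * U y i * V y j) x (fun i => DifferentiableAt.fun_sum (fun j _ => hd i j))]
  refine Finset.sum_congr rfl fun i _ => ?_
  rw [pd_sumF l _ x (fun j => hd i j)]
  refine Finset.sum_congr rfl fun j _ => ?_
  rw [pd_mul l (fun y => T y i j * U y i) (fun y => V y j) x
      ((diffT2 hT i j).mul (diffV hU i)).differentiableAt (diffV hV j).differentiableAt,
    pd_mul l (fun y => T y i j) (fun y => U y i) x
      (diffT2 hT i j).differentiableAt (diffV hU i).differentiableAt]
  ring

end Expand

section Canon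
variable {m : ℕ}

lemma sum_rot3 (f : Fin m → Fin m → Fin m → ℝ) :
    (∑ i, ∑ j, ∑ l, f i j l) = ∑ l, ∑ i, ∑ j, f i j l := by
  calc (∑ i, ∑ j, ∑ l, f i j l) = ∑ i, ∑ l, ∑ j, f i j l :=
        Finset.sum_congr rfl fun i _ => Finset.sum_comm
    _ = ∑ l, ∑ i, ∑ j, f i j l := Finset.sum_comm

lemma pd_T_anti {T : T02 m} (h : ∀ x i j, T x i j = - T x j i) (l i j : Fin m) (x : Pt m) :
    pd l (fun y => T y i j) x = - pd l (fun y => T y j i) x := by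
  rw [show (fun y => T y i j) = (fun y => -(T y j i)) from funext fun y => h y i j, pd_neg]

lemma xdot_ev1 {ψ Z : VF m} (W : VF m) (hψ : ContDiff ℝ (⊤:ℕ∞) ψ)
    (hZ : ContDiff ℝ (⊤:ℕ∞) Z) (x : Pt m) :
    Xdot W (ev1 ψ Z) x = ∑ l, ∑ i,
      W x l * (pd l (fun y => ψ y i) x * Z x i + ψ x i * pd l (fun y => Z y i) x) := by
  rw [show Xdot W (ev1 ψ Z) x = ∑ l, W x l * pd l (ev1 ψ Z) x from rfl]
  refine Finset.sum_congr rfl fun l _ => ?_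
  rw [pd_ev1 hψ hZ l x, Finset.mul_sum]

lemma ev1_lieB (ψ W Z : VF m) (x : Pt m) :
    ev1 ψ (lieB W Z) x = ∑ l, ∑ i,
      ψ x i * (W x l * pd l (fun y => Z y i) x - Z x l * pd l (fun y => W y i) x) := by
  simp only [ev1, lieB, Finset.mul_sum]
  exact Finset.sum_comm

lemma cartan1 {W ψ Z : VF m} (hW : ContDiff ℝ (⊤:ℕ∞) W) (hψ : ContDiff ℝ (⊤:ℕ∞) ψ)
    (hZ : ContDiff ℝ (⊤:ℕ∞) Z) (x : Pt m) :
    lie1 W ψ Z x = ev2 (d2 ψ) W Z x + Xdot Z (ev1 ψ W) x := by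
  rw [show lie1 W ψ Z x = Xdot W (ev1 ψ Z) x - ev1 ψ (lieB W Z) x from rfl,
    xdot_ev1 W hψ hZ x, ev1_lieB ψ W Z x, xdot_ev1 Z hψ hW x,
    show ev2 (d2 ψ) W Z x = ∑ l, ∑ i,
      (pd l (fun y => ψ y i) x - pd i (fun y => ψ y l) x) * W x l * Z x i from rfl,
    ← sub_eq_zero]
  simp only [← Finset.sum_sub_distrib, ← Finset.sum_add_distrib]
  exact sum_antisym_zero _ fun l i => by ring

end Canon

section Main3
variable {m : ℕ}

lemma xdot_ev2 {T : T02 m} {U V : VF m} (W : VF m) (hT : ContDiff ℝ (⊤:ℕ∞) T)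
    (hU : ContDiff ℝ (⊤:ℕ∞) U) (hV : ContDiff ℝ (⊤:ℕ∞) V) (x : Pt m) :
    Xdot W (ev2 T U V) x = ∑ l, ∑ i, ∑ j,
      W x l * (pd l (fun y => T y i j) x * U x i * V x j
        + T x i j * pd l (fun y => U y i) x * V x j
        + T x i j * U x i * pd l (fun y => V y j) x) := by
  rw [show Xdot W (ev2 T U V) x = ∑ l, W x l * pd l (ev2 T U V) x from rfl]
  refine Finset.sum_congr rfl fun l _ => ?_
  rw [pd_ev2 hT hU hV l x, Finset.mul_sum]
  exact Finset.sum_congr rfl fun i _ => Finset.mul_sum _ _ _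

lemma ev2_lieB_L (T : T02 m) (U V W : VF m) (x : Pt m) :
    ev2 T (lieB U V) W x = ∑ l, ∑ i, ∑ j,
      T x i j * (U x l * pd l (fun y => V y i) x - V x l * pd l (fun y => U y i) x) * W x j := by
  simp only [ev2, lieB, Finset.mul_sum, Finset.sum_mul]
  conv_lhs => rw [sum_rot3]

lemma ev2_lieB_R (T : T02 m) (U V W : VF m) (x : Pt m) :
    ev2 T U (lieB V W) x = ∑ l, ∑ i, ∑ j,
      T x i j * U x i * (V x l * pd l (fun y => W y j) x - W x l * pd l (fun y => V y j) x) := by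
  simp only [ev2, lieB, Finset.mul_sum, Finset.sum_mul]
  conv_lhs => rw [sum_rot3]

lemma ev3_d3_expand (T : T02 m) (X Y Z : VF m) (x : Pt m) :
    ev3 (d3 T) X Y Z x = ∑ l, ∑ i, ∑ j, pd l (fun y => T y i j) x *
      (X x l * Y x i * Z x j - X x i * Y x l * Z x j + X x i * Y x j * Z x l) := by
  have e0 : ev3 (d3 T) X Y Z x
      = (∑ i, ∑ j, ∑ k, pd i (fun y => T y j k) x * (X x i * Y x j * Z x k))
        - (∑ i, ∑ j, ∑ k, pd j (fun y => T y i k) x * (X x i * Y x j * Z x k))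
        + (∑ i, ∑ j, ∑ k, pd k (fun y => T y i j) x * (X x i * Y x j * Z x k)) := by
    calc ev3 (d3 T) X Y Z x
        = ∑ i, ∑ j, ∑ k, (pd i (fun y => T y j k) x * (X x i * Y x j * Z x k)
            - pd j (fun y => T y i k) x * (X x i * Y x j * Z x k)
            + pd k (fun y => T y i j) x * (X x i * Y x j * Z x k)) := by
          simp only [ev3, d3]
          exact Finset.sum_congr rfl fun i _ => Finset.sum_congr rfl fun j _ =>
            Finset.sum_congr rfl fun k _ => by ring
      _ = _ := by simp only [Finset.sum_sub_distrib, Finset.sum_add_distrib]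
  have e2 : (∑ i, ∑ j, ∑ k, pd j (fun y => T y i k) x * (X x i * Y x j * Z x k))
      = ∑ l, ∑ i, ∑ j, pd l (fun y => T y i j) x * (X x i * Y x l * Z x j) :=
    Finset.sum_comm
  have e3 : (∑ i, ∑ j, ∑ k, pd k (fun y => T y i j) x * (X x i * Y x j * Z x k))
      = ∑ l, ∑ i, ∑ j, pd l (fun y => T y i j) x * (X x i * Y x j * Z x l) :=
    sum_rot3 _
  rw [e0, e2, e3]
  simp only [mul_sub, mul_add, Finset.sum_sub_distrib, Finset.sum_add_distrib]

lemma main3 {T : T02 m} {X Y Z : VF m} (hT : ContDiff ℝ (⊤:ℕ∞) T)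
    (hanti : ∀ x i j, T x i j = - T x j i)
    (hX : ContDiff ℝ (⊤:ℕ∞) X) (hY : ContDiff ℝ (⊤:ℕ∞) Y) (hZ : ContDiff ℝ (⊤:ℕ∞) Z)
    (x : Pt m) :
    Xdot Z (ev2 T X Y) x - lie2 X T Z Y x - lie2 Y T X Z x + ev2 T (lieB X Y) Z x
      = ev3 (d3 T) X Y Z x := by
  rw [show lie2 X T Z Y x
      = Xdot X (ev2 T Z Y) x - ev2 T (lieB X Z) Y x - ev2 T Z (lieB X Y) x from rfl,
    show lie2 Y T X Z x
      = Xdot Y (ev2 T X Z) x - ev2 T (lieB Y X) Z x - ev2 T X (lieB Y Z) x from rfl,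
    xdot_ev2 Z hT hX hY x, xdot_ev2 X hT hZ hY x, xdot_ev2 Y hT hX hZ x,
    ev2_lieB_L T X Z Y x, ev2_lieB_R T Z X Y x, ev2_lieB_L T Y X Z x,
    ev2_lieB_R T X Y Z x, ev2_lieB_L T X Y Z x, ev3_d3_expand T X Y Z x,
    ← sub_eq_zero]
  simp only [← Finset.sum_sub_distrib, ← Finset.sum_add_distrib]
  refine Finset.sum_eq_zero fun l _ => ?_
  refine sum_antisym_zero _ fun i j => ?_
  have h1 : T x j i = - T x i j := hanti x j i
  have h2 : pd l (fun y => T y j i) x = - pd l (fun y => T y i j) x := pd_T_anti hanti l j i x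
  linear_combination
    (-(Y x l * (Z x i * pd l (fun y => X y j) x + Z x j * pd l (fun y => X y i) x))) * h1
    + (-(X x l * (Z x i * Y x j + Y x i * Z x j))) * h2

end Main3

section Assemble
variable {m : ℕ}

lemma psiS_anti {S : T3 m} {ψ : VF m} (hanti : ∀ x a j k, S x a j k = - S x a k j) :
    ∀ x j k, psiS ψ S x j k = - psiS ψ S x k j := by
  intro x j k
  simp only [psiS]
  calc ∑ a, ψ x a * S x a j k = ∑ a, -(ψ x a * S x a k j) :=
        Finset.sum_congr rfl fun a _ => by rw [hanti x a j k]; ring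
    _ = - ∑ a, ψ x a * S x a k j := by simp

lemma ev1_appS (ψ : VF m) (S : T3 m) (X Y : VF m) (x : Pt m) :
    ev1 ψ (appS S X Y) x = ev2 (psiS ψ S) X Y x := by
  simp only [ev1, appS, ev2, psiS, Finset.mul_sum, Finset.sum_mul]
  conv_lhs => rw [Finset.sum_comm]
  refine Finset.sum_congr rfl fun j _ => ?_
  conv_lhs => rw [Finset.sum_comm]
  exact Finset.sum_congr rfl fun k _ => Finset.sum_congr rfl fun a _ => by ring

lemma appS_swap {S : T3 m} (hanti : ∀ x a j k, S x a j k = - S x a k j)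
    (U V : VF m) (x : Pt m) (a : Fin m) :
    appS S V U x a = - appS S U V x a := by
  simp only [appS]
  calc ∑ j, ∑ k, S x a j k * V x j * U x k
      = ∑ k, ∑ j, S x a j k * V x j * U x k := Finset.sum_comm
    _ = ∑ k, ∑ j, -(S x a k j * U x k * V x j) :=
        Finset.sum_congr rfl fun k _ => Finset.sum_congr rfl fun j _ => by
          rw [hanti x a j k]; ring
    _ = - ∑ j, ∑ k, S x a j k * U x j * V x k := by simp

lemma ev2_d2_appS_swap {S : T3 m} (hanti : ∀ x a j k, S x a j k = - S x a k j)
    (ψ U V W : VF m) (x : Pt m) :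
    ev2 (d2 ψ) (appS S V U) W x = - ev2 (d2 ψ) (appS S U V) W x := by
  simp only [ev2]
  calc ∑ i, ∑ j, d2 ψ x i j * appS S V U x i * W x j
      = ∑ i, ∑ j, -(d2 ψ x i j * appS S U V x i * W x j) :=
        Finset.sum_congr rfl fun i _ => Finset.sum_congr rfl fun j _ => by
          rw [appS_swap hanti U V x i]; ring
    _ = - ∑ i, ∑ j, d2 ψ x i j * appS S U V x i * W x j := by simp

lemma ev3_swap12 {T : T02 m} (hanti : ∀ x i j, T x i j = - T x j i)
    (U V W : VF m) (x : Pt m) :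
    ev3 (d3 T) V U W x = - ev3 (d3 T) U V W x := by
  have h : ev3 (d3 T) V U W x + ev3 (d3 T) U V W x = 0 := by
    rw [ev3_d3_expand, ev3_d3_expand]
    simp only [← Finset.sum_add_distrib]
    refine Finset.sum_eq_zero fun l _ => ?_
    refine sum_antisym_zero _ fun i j => ?_
    have h2 : pd l (fun y => T y j i) x = - pd l (fun y => T y i j) x := pd_T_anti hanti l j i x
    linear_combination (V x i * U x j * W x l + U x i * V x j * W x l) * h2
  linarith

lemma ev3_swap23 {T : T02 m} (hanti : ∀ x i j, T x i j = - T x j i)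
    (U V W : VF m) (x : Pt m) :
    ev3 (d3 T) U W V x = - ev3 (d3 T) U V W x := by
  have h : ev3 (d3 T) U W V x + ev3 (d3 T) U V W x = 0 := by
    rw [ev3_d3_expand, ev3_d3_expand]
    simp only [← Finset.sum_add_distrib]
    refine Finset.sum_eq_zero fun l _ => ?_
    refine sum_antisym_zero _ fun i j => ?_
    have h2 : pd l (fun y => T y j i) x = - pd l (fun y => T y i j) x := pd_T_anti hanti l j i x
    linear_combination (U x l * W x i * V x j + U x l * V x i * W x j) * h2
  linarith

lemma contDiff_appS {S : T3 m} {U V : VF m} (hS : ContDiff ℝ (⊤:ℕ∞) S)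
    (hU : ContDiff ℝ (⊤:ℕ∞) U) (hV : ContDiff ℝ (⊤:ℕ∞) V) :
    ContDiff ℝ (⊤:ℕ∞) (appS S U V) := by
  rw [show appS S U V = fun x a => ∑ j, ∑ k, S x a j k * U x j * V x k from rfl, contDiff_pi]
  intro a
  refine ContDiff.sum fun j _ => ContDiff.sum fun k _ => ?_
  exact (((contDiff_pi.1 ((contDiff_pi.1 ((contDiff_pi.1 hS) a)) j)) k).mul
    ((contDiff_pi.1 hU) j)).mul ((contDiff_pi.1 hV) k)

lemma yA_eq {S : T3 m} {ψ : VF m} (hS : ContDiff ℝ (⊤:ℕ∞) S) (hψ : ContDiff ℝ (⊤:ℕ∞) ψ)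
    (hanti : ∀ x a j k, S x a j k = - S x a k j)
    {U V W : VF m} (hU : ContDiff ℝ (⊤:ℕ∞) U) (hV : ContDiff ℝ (⊤:ℕ∞) V)
    (hW : ContDiff ℝ (⊤:ℕ∞) W) (x : Pt m) :
    yanoAko S ψ U V W x
      = ev2 (d2 ψ) (appS S U V) W x + ev3 (d3 (psiS ψ S)) U V W x := by
  have hT : ContDiff ℝ (⊤:ℕ∞) (psiS ψ S) := contDiff_psiS hS hψ
  have hanti' : ∀ x i j, psiS ψ S x i j = - psiS ψ S x j i := psiS_anti hanti
  have h2 : ev1 ψ (appS S U V) = ev2 (psiS ψ S) U V := funext fun y => ev1_appS ψ S U V y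
  rw [show yanoAko S ψ U V W x
      = lie1 (appS S U V) ψ W x - lie2 U (psiS ψ S) W V x - lie2 V (psiS ψ S) U W x
        + ev2 (psiS ψ S) (lieB U V) W x from rfl,
    cartan1 (contDiff_appS hS hU hV) hψ hW x, h2]
  have h3 := main3 hT hanti' hU hV hW x
  linarith

end Assemble

/-- Remark 4.3: the full antisymmetrization of the Yano–Ako operator satisfies
`3·Alt Φ(S,ψ) = L_S ψ + 2·d(ψ∘S)`. -/
theorem stmt19 (m : ℕ) (S : T3 m) (ψ : VF m)
    (hS : ContDiff ℝ (⊤ : ℕ∞) S) (hψ : ContDiff ℝ (⊤ : ℕ∞) ψ)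
    (hanti : ∀ x a j k, S x a j k = - S x a k j)
    (X Y Z : VF m) (hX : ContDiff ℝ (⊤ : ℕ∞) X) (hY : ContDiff ℝ (⊤ : ℕ∞) Y)
    (hZ : ContDiff ℝ (⊤ : ℕ∞) Z) :
    ∀ x : Pt m,
      3 * altOp (yanoAko S ψ) X Y Z x
        = lieS S ψ X Y Z x + 2 * ev3 (d3 (psiS ψ S)) X Y Z x := by
  intro x
  have hanti' : ∀ x i j, psiS ψ S x i j = - psiS ψ S x j i := psiS_anti hanti
  -- the six Yano–Ako terms
  have e1 := yA_eq hS hψ hanti hX hY hZ x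
  have e2 := yA_eq hS hψ hanti hY hX hZ x
  have e3 := yA_eq hS hψ hanti hY hZ hX x
  have e4 := yA_eq hS hψ hanti hZ hY hX x
  have e5 := yA_eq hS hψ hanti hZ hX hY x
  have e6 := yA_eq hS hψ hanti hX hZ hY x
  -- antisymmetry of the dψ(S(·,·),·) terms
  have a2 : ev2 (d2 ψ) (appS S Y X) Z x = - ev2 (d2 ψ) (appS S X Y) Z x :=
    ev2_d2_appS_swap hanti ψ X Y Z x
  have a4 : ev2 (d2 ψ) (appS S Z Y) X x = - ev2 (d2 ψ) (appS S Y Z) X x :=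
    ev2_d2_appS_swap hanti ψ Y Z X x
  have a6 : ev2 (d2 ψ) (appS S X Z) Y x = - ev2 (d2 ψ) (appS S Z X) Y x :=
    ev2_d2_appS_swap hanti ψ Z X Y x
  -- total antisymmetry of `ev3 (d3 (ψ∘S))`
  have d2' : ev3 (d3 (psiS ψ S)) Y X Z x = - ev3 (d3 (psiS ψ S)) X Y Z x :=
    ev3_swap12 hanti' X Y Z x
  have d3' : ev3 (d3 (psiS ψ S)) Y Z X x = ev3 (d3 (psiS ψ S)) X Y Z x := by
    rw [ev3_swap23 hanti' Y X Z x, d2', neg_neg]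
  have d4' : ev3 (d3 (psiS ψ S)) Z Y X x = - ev3 (d3 (psiS ψ S)) X Y Z x := by
    rw [ev3_swap12 hanti' Y Z X x, d3']
  have d5' : ev3 (d3 (psiS ψ S)) Z X Y x = ev3 (d3 (psiS ψ S)) X Y Z x := by
    rw [ev3_swap23 hanti' Z Y X x, d4', neg_neg]
  have d6' : ev3 (d3 (psiS ψ S)) X Z Y x = - ev3 (d3 (psiS ψ S)) X Y Z x := by
    rw [ev3_swap12 hanti' Z X Y x, d5']
  simp only [altOp, lieS]
  rw [e1, e2, e3, e4, e5, e6, a2, a4, a6, d2', d3', d4', d5', d6']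
  ring
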